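/- Given single-piece existential rules R1: B1 → H1 and R2: B2 → H2 with disjoint variables, and a piece-unifier μ = (B2', H1', u) of B2 with R1 such that u maps no frontier variable of R2 to an existential variable of R1, the existential composition R2 ∘_μ R1 = u(B1) ∪ u(B2 \ B2') → u(H2) is logically entailed by {R1, R2}. -/
import Mathlib


open scoped Classical
noncomputable section

namespace ER

/-- Terms: constants or variables (variables occurring in instances are called nulls). -/
inductive Term where
  | const : ℕ → Term
  | var : ℕ → Term
deriving DecidableEq

def Term.isConst : Term → Prop
  | .const _ => True
  | .var _ => False

/-- An atom `p(t₁,…,tₙ)`. -/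
structure Atom where
  pred : ℕ
  args : List Term
deriving DecidableEq

def Atom.terms (a : Atom) : Set Term := {t | t ∈ a.args}
def Atom.vars (a : Atom) : Set ℕ := {v | Term.var v ∈ a.args}

def termsOf (S : Set Atom) : Set Term := ⋃ a ∈ S, a.terms
def varsOf (S : Set Atom) : Set ℕ := ⋃ a ∈ S, a.vars
/-- The nulls (non-constant terms) occurring in a set of atoms. -/
def nullsOf (S : Set Atom) : Set Term := {t | t ∈ termsOf S ∧ ¬ t.isConst}

def Term.subst (σ : ℕ → Term) : Term → Term
  | .const c => .const c
  | .var v => σ v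

def Atom.subst (σ : ℕ → Term) (a : Atom) : Atom := ⟨a.pred, a.args.map (Term.subst σ)⟩
def substSet (σ : ℕ → Term) (S : Set Atom) : Set Atom := (Atom.subst σ) '' S

/-- A homomorphism from `S1` to `S2`: a substitution of variables by terms mapping `S1` into `S2`. -/
def isHom (σ : ℕ → Term) (S1 S2 : Set Atom) : Prop := substSet σ S1 ⊆ S2

/-- An injective homomorphism (injective on the terms of the source). -/
def isInjHom (σ : ℕ → Term) (S1 S2 : Set Atom) : Prop :=
  isHom σ S1 S2 ∧ Set.InjOn (Term.subst σ) (termsOf S1)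

/-- An instance is a finite set of ground atoms. -/
def IsInstance (I : Set Atom) : Prop := I.Finite ∧ ∀ t ∈ termsOf I, t.isConst

/-- An existential rule, given by its body and head. -/
structure Rule where
  body : Set Atom
  head : Set Atom

def Rule.frontier (R : Rule) : Set ℕ := varsOf R.body ∩ varsOf R.head
def Rule.exist (R : Rule) : Set ℕ := varsOf R.head \ varsOf R.body

/-- Well-formed rule: finite non-empty body and head, no constants. -/
def WfRule (R : Rule) : Prop :=
  R.body.Finite ∧ R.head.Finite ∧ R.body.Nonempty ∧ R.head.Nonempty ∧
  ∀ t ∈ termsOf (R.body ∪ R.head), ¬ t.isConst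

def WfList (L : List Rule) : Prop := ∀ R ∈ L, WfRule R

/-- Restriction of a substitution to a set of variables (default value elsewhere). -/
def restrict (f : ℕ → Term) (F : Set ℕ) : ℕ → Term :=
  fun v => if v ∈ F then f v else Term.const 0

/-- A semi-oblivious naming of nulls for the rules of `L`: the null created for an
existential variable depends only on the rule and the restriction of the trigger to the
frontier, and distinct such data yield distinct nulls. -/
def SONaming (L : List Rule) (ν : Rule → (ℕ → Term) → ℕ → ℕ) : Prop :=
  (∀ R ∈ L, ∀ f g : ℕ → Term,
      restrict f R.frontier = restrict g R.frontier → ν R f = ν R g) ∧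
  (∀ R ∈ L, ∀ R' ∈ L, ∀ f f' x x', ν R f x = ν R' f' x' →
      R = R' ∧ restrict f R.frontier = restrict f' R'.frontier ∧ x = x')

/-- The safe extension of a trigger `π`, replacing each existential variable by its null. -/
def safeSub (ν : Rule → (ℕ → Term) → ℕ → ℕ) (R : Rule) (π : ℕ → Term) : ℕ → Term :=
  fun y => if y ∈ R.exist then Term.var (ν R (restrict π R.frontier) y) else π y

/-- One breadth-first semi-oblivious chase step. -/
def chaseStep (ν : Rule → (ℕ → Term) → ℕ → ℕ) (L : List Rule) (S : Set Atom) : Set Atom :=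
  S ∪ {a | ∃ R ∈ L, ∃ π : ℕ → Term, isHom π R.body S ∧ a ∈ substSet (safeSub ν R π) R.head}

/-- The breadth-first semi-oblivious chase. -/
def chaseF (ν : Rule → (ℕ → Term) → ℕ → ℕ) (L : List Rule) (I : Set Atom) : ℕ → Set Atom
  | 0 => I
  | k + 1 => chaseStep ν L (chaseF ν L I k)

def chaseInf (ν : Rule → (ℕ → Term) → ℕ → ℕ) (L : List Rule) (I : Set Atom) : Set Atom :=
  ⋃ k, chaseF ν L I k

/-- `L'` parallelises `L`. -/
def Parallelises (L' L : List Rule) : Prop :=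
  ∀ ν ν', SONaming L ν → SONaming L' ν' → ∀ I, IsInstance I →
    (∃ σ, isInjHom σ (chaseInf ν L I) (chaseF ν' L' I 1)) ∧
    (∃ σ, isHom σ (chaseF ν' L' I 1) (chaseInf ν L I))

def Parallelisable (L : List Rule) : Prop := ∃ L', WfList L' ∧ Parallelises L' L

/-- Boundedness of the semi-oblivious chase, uniformly over all instances. -/
def Bounded (L : List Rule) : Prop :=
  ∃ k, ∀ ν, SONaming L ν → ∀ I, IsInstance I → chaseF ν L I k = chaseInf ν L I

def ChaseFinite (L : List Rule) : Prop :=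
  ∀ ν, SONaming L ν → ∀ I, IsInstance I → ∃ k, chaseF ν L I k = chaseInf ν L I

/-- Two atoms are `T`-linked if they share a term of `T`. -/
def linked (T : Set Term) (a b : Atom) : Prop := ∃ t ∈ T, t ∈ a.terms ∧ t ∈ b.terms

/-- Connectivity in `S` by a path of atoms where consecutive atoms share a term of `T`. -/
def connectedIn (S : Set Atom) (T : Set Term) (a b : Atom) : Prop :=
  a ∈ S ∧ b ∈ S ∧ Relation.ReflTransGen (fun x y => x ∈ S ∧ y ∈ S ∧ linked T x y) a b

/-- `P` is closed in `S` w.r.t. `T`-linkedness. -/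
def closedIn (S : Set Atom) (T : Set Term) (P : Set Atom) : Prop :=
  ∀ a ∈ S, ∀ b ∈ P, linked T a b → a ∈ P

/-- A piece of `S` w.r.t. `T`: a non-empty subset closed under `T`-linkedness and minimal such. -/
def IsPiece (S : Set Atom) (T : Set Term) (P : Set Atom) : Prop :=
  P.Nonempty ∧ P ⊆ S ∧ closedIn S T P ∧
  ∀ P', P' ⊆ P → P'.Nonempty → closedIn S T P' → P' = P

/-- A single-piece rule: its head is a piece of itself w.r.t. its existential variables. -/
def SinglePiece (R : Rule) : Prop := IsPiece R.head (Term.var '' R.exist) R.head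

/-- The rule used at step `k` of a derivation. -/
def ruleAt (L : List Rule) (r : ℕ → ℕ) (k : ℕ) : Rule := L.getD (r k) ⟨∅, ∅⟩

/-- The set of atoms produced by the `k`-th rule application of a derivation. -/
def producedAt (ν : Rule → (ℕ → Term) → ℕ → ℕ) (L : List Rule) (r : ℕ → ℕ)
    (π : ℕ → ℕ → Term) (k : ℕ) : Set Atom :=
  substSet (safeSub ν (ruleAt L r k) (π k)) (ruleAt L r k).head

def derivState (ν : Rule → (ℕ → Term) → ℕ → ℕ) (L : List Rule) (I : Set Atom)
    (r : ℕ → ℕ) (π : ℕ → ℕ → Term) : ℕ → Set Atom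
  | 0 => I
  | k + 1 => derivState ν L I r π k ∪ producedAt ν L r π k

/-- An `R`-derivation of length `n` from `I`: each step applies a trigger. -/
def IsDeriv (ν : Rule → (ℕ → Term) → ℕ → ℕ) (L : List Rule) (I : Set Atom) (n : ℕ)
    (r : ℕ → ℕ) (π : ℕ → ℕ → Term) : Prop :=
  ∀ k < n, r k < L.length ∧ isHom (π k) (ruleAt L r k).body (derivState ν L I r π k)

/-- A pieceful derivation: each trigger maps its rule's frontier entirely into the terms of
the initial instance, or entirely into the terms produced by a single earlier application. -/
def PiecefulDeriv (ν : Rule → (ℕ → Term) → ℕ → ℕ) (L : List Rule) (I : Set Atom) (n : ℕ)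
    (r : ℕ → ℕ) (π : ℕ → ℕ → Term) : Prop :=
  ∀ k < n, (∀ x ∈ (ruleAt L r k).frontier, π k x ∈ termsOf I) ∨
    ∃ j < k, ∀ x ∈ (ruleAt L r k).frontier, π k x ∈ termsOf (producedAt ν L r π j)

/-- A pieceful rule set: every derivation from every instance is pieceful. -/
def PiecefulSet (L : List Rule) : Prop :=
  ∀ ν, SONaming L ν → ∀ I, IsInstance I → ∀ n r π,
    IsDeriv ν L I n r π → PiecefulDeriv ν L I n r π

/-- First-order structures for the semantics of rules. -/
structure Struct where
  D : Type
  nonempty : Nonempty D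
  interp : ℕ → List D → Prop
  cinterp : ℕ → D

def evalT (M : Struct) (v : ℕ → M.D) : Term → M.D
  | .const c => M.cinterp c
  | .var x => v x

def holdsA (M : Struct) (v : ℕ → M.D) (a : Atom) : Prop :=
  M.interp a.pred (a.args.map (evalT M v))

/-- Satisfaction of (the universal-existential closure of) a rule in a structure. -/
def satRule (M : Struct) (R : Rule) : Prop :=
  ∀ v : ℕ → M.D, (∀ a ∈ R.body, holdsA M v a) →
    ∃ w : ℕ → M.D, (∀ x ∈ varsOf R.body, w x = v x) ∧ ∀ a ∈ R.head, holdsA M w a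

/-- Separating variables of `S' ⊆ S`: variables occurring both in `S'` and in `S \ S'`. -/
def sepVars (S' S : Set Atom) : Set ℕ := varsOf S' ∩ varsOf (S \ S')

/-- A piece-unifier `(S', H', u)` of a set of atoms `S` with a rule `R`. -/
def IsPieceUnifier (S : Set Atom) (R : Rule) (S' H' : Set Atom) (u : ℕ → Term) : Prop :=
  Disjoint (varsOf S) (varsOf (R.body ∪ R.head)) ∧
  S'.Nonempty ∧ S' ⊆ S ∧ H' ⊆ R.head ∧
  (∀ x, x ∉ R.frontier ∪ varsOf S' → u x = Term.var x) ∧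
  (∀ x ∈ R.frontier ∪ varsOf S', ∃ y ∈ varsOf R.head, u x = Term.var y) ∧
  (∀ x ∈ R.frontier, ∃ y ∈ R.frontier, u x = Term.var y) ∧
  (∀ x ∈ sepVars S' S, ∃ y ∈ R.frontier, u x = Term.var y) ∧
  substSet u S' = substSet u H'

/-- The existential stability property of a piece-unifier of `body R2` with `R1`. -/
def StableUnifier (R2 R1 : Rule) (B2' : Set Atom) (u : ℕ → Term) : Prop :=
  (∀ x ∈ R2.frontier, u x ∉ Term.var '' R1.exist) ∨ R2.frontier ⊆ varsOf B2'

/-- The existential composition `R2 ∘_μ R1` w.r.t. a piece-unifier `μ = (B2', H1', u)`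
of `body R2` with `R1`. -/
def compose (R2 R1 : Rule) (B2' : Set Atom) (u : ℕ → Term) : Rule :=
  if ∀ x ∈ R2.frontier, u x ∉ Term.var '' R1.exist then
    ⟨substSet u R1.body ∪ substSet u (R2.body \ B2'), substSet u R2.head⟩
  else
    ⟨substSet u R1.body ∪ substSet u (R2.body \ B2'),
     substSet u R1.head ∪ substSet u R2.head⟩

/-- The closure `R*` of a rule set under existential composition. -/
inductive InClosure (𝒮 : Set Rule) : Rule → Prop
  | base {R : Rule} : R ∈ 𝒮 → InClosure 𝒮 R
  | comp {Ri Rj : Rule} {B' H' : Set Atom} {u : ℕ → Term} :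
      InClosure 𝒮 Ri → InClosure 𝒮 Rj →
      IsPieceUnifier Ri.body Rj B' H' u → InClosure 𝒮 (compose Ri Rj B' u)

def ruleSet (L : List Rule) : Set Rule := {R | R ∈ L}

/-- The stability property for a (possibly infinite) rule set. -/
def StableSet (𝒮 : Set Rule) : Prop :=
  ∀ R1 ∈ 𝒮, ∀ R2 ∈ 𝒮, ∀ B2' H1' u,
    IsPieceUnifier R2.body R1 B2' H1' u → StableUnifier R2 R1 B2' u

/-- `J` is a result of one breadth-first chase step of a (possibly infinite) rule set on `I`,
with fresh pairwise-compatible nulls (semi-oblivious naming). -/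
def OneStepResult (𝒮 : Set Rule) (I J : Set Atom) : Prop :=
  ∃ ν : Rule → (ℕ → Term) → ℕ → ℕ,
    (∀ R ∈ 𝒮, ∀ f x, Term.var (ν R f x) ∉ termsOf I) ∧
    (∀ R ∈ 𝒮, ∀ R' ∈ 𝒮, ∀ f f' x x', ν R f x = ν R' f' x' →
        R = R' ∧ restrict f R.frontier = restrict f' R'.frontier ∧ x = x') ∧
    J = I ∪ {a | ∃ R ∈ 𝒮, ∃ π : ℕ → Term, isHom π R.body I ∧
                  a ∈ substSet (safeSub ν R π) R.head}

/-- `I, R ⊨ q` for a Boolean conjunctive query `q` (a set of atoms). -/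
def Entails (L : List Rule) (I q : Set Atom) : Prop :=
  ∀ ν, SONaming L ν → ∃ k σ, isHom σ q (chaseF ν L I k)

/-- The null `t` occurs in at least `n` atoms of `S`. -/
def occursInAtLeast (S : Set Atom) (t : Term) (n : ℕ) : Prop :=
  ∃ F : Set Atom, F ⊆ {a | a ∈ S ∧ t ∈ a.terms} ∧ F.Finite ∧ n ≤ F.ncard

def FrontierGuarded (R : Rule) : Prop := ∃ a ∈ R.body, R.frontier ⊆ a.vars

def IsDatalog (R : Rule) : Prop := R.exist = ∅ ∧ ∃ a, R.head = {a}

end ER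
namespace ER
lemma evalT_subst (M : Struct) (v : ℕ → M.D) (u : ℕ → Term) (t : Term) :
    evalT M v (Term.subst u t) = evalT M (fun x => evalT M v (u x)) t := by
  cases t <;> rfl

lemma holdsA_subst (M : Struct) (v : ℕ → M.D) (u : ℕ → Term) (a : Atom) :
    holdsA M v (Atom.subst u a) ↔ holdsA M (fun x => evalT M v (u x)) a := by
  unfold holdsA Atom.subst
  have heq : List.map (evalT M v) (List.map (Term.subst u) a.args)
      = List.map (evalT M (fun x => evalT M v (u x))) a.args := by
    rw [List.map_map]
    apply List.map_congr_left
    intro t _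
    simp only [Function.comp_apply]
    exact evalT_subst M v u t
  rw [heq]

lemma holdsA_congr (M : Struct) {v w : ℕ → M.D} (a : Atom)
    (h : ∀ x, Term.var x ∈ a.args → v x = w x) :
    holdsA M v a ↔ holdsA M w a := by
  unfold holdsA
  have : a.args.map (evalT M v) = a.args.map (evalT M w) := by
    apply List.map_congr_left
    intro t ht
    cases t with
    | const c => rfl
    | var x => exact h x ht
  rw [this]

lemma mem_varsOf {S : Set Atom} {x : ℕ} :
    x ∈ varsOf S ↔ ∃ a ∈ S, Term.var x ∈ a.args := by
  simp [varsOf, Atom.vars]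

lemma varsOf_union (S T : Set Atom) : varsOf (S ∪ T) = varsOf S ∪ varsOf T := by
  ext x
  simp only [mem_varsOf, Set.mem_union]
  constructor
  · rintro ⟨a, h | h, hx⟩
    exacts [Or.inl ⟨a, h, hx⟩, Or.inr ⟨a, h, hx⟩]
  · rintro (⟨a, h, hx⟩ | ⟨a, h, hx⟩)
    exacts [⟨a, Or.inl h, hx⟩, ⟨a, Or.inr h, hx⟩]

lemma varsOf_mono {S T : Set Atom} (h : S ⊆ T) : varsOf S ⊆ varsOf T := by
  intro x hx
  rw [mem_varsOf] at *
  obtain ⟨a, ha, hxa⟩ := hx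
  exact ⟨a, h ha, hxa⟩

lemma mem_varsOf_substSet {S : Set Atom} {u : ℕ → Term} {x : ℕ} :
    x ∈ varsOf (substSet u S) ↔ ∃ z ∈ varsOf S, u z = Term.var x := by
  constructor
  · intro hx
    rw [mem_varsOf] at hx
    obtain ⟨a, ha, hxa⟩ := hx
    obtain ⟨b, hb, rfl⟩ := ha
    simp only [Atom.subst, List.mem_map] at hxa
    obtain ⟨t, ht, het⟩ := hxa
    cases t with
    | const c => simp [Term.subst] at het
    | var z => exact ⟨z, mem_varsOf.2 ⟨b, hb, ht⟩, het⟩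
  · rintro ⟨z, hz, hzx⟩
    rw [mem_varsOf] at hz ⊢
    obtain ⟨b, hb, hzb⟩ := hz
    refine ⟨Atom.subst u b, ⟨b, hb, rfl⟩, ?_⟩
    simp only [Atom.subst, List.mem_map]
    exact ⟨Term.var z, hzb, hzx⟩

/-- if no frontier variable of `R2` is unified with an existential variable
of `R1`, the existential composition `u(B1) ∪ u(B2 \ B2') → u(H2)` is entailed by `{R1,R2}`. -/
theorem composition_sound_case1 (R1 R2 : Rule) (h1 : WfRule R1) (h2 : WfRule R2)
    (hs1 : SinglePiece R1) (hs2 : SinglePiece R2)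
    (hdisj : Disjoint (varsOf (R1.body ∪ R1.head)) (varsOf (R2.body ∪ R2.head)))
    (B2' H1' : Set Atom) (u : ℕ → Term)
    (hu : IsPieceUnifier R2.body R1 B2' H1' u)
    (hc : ∀ x ∈ R2.frontier, u x ∉ Term.var '' R1.exist) :
    ∀ M : Struct, satRule M R1 → satRule M R2 →
      satRule M ⟨substSet u R1.body ∪ substSet u (R2.body \ B2'),
                 substSet u R2.head⟩ := by
  obtain ⟨hduB, hne, hsub, hH'sub, hfix, hmap, hfr, hsep, heq⟩ := hu
  intro M sat1 sat2 v hbv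
  have hD : ∀ x, (x ∈ varsOf R1.body ∨ x ∈ varsOf R1.head) →
      (x ∈ varsOf R2.body ∨ x ∈ varsOf R2.head) → False := by
    intro x h1 h2
    exact Set.disjoint_left.1 hdisj (by rw [varsOf_union]; exact h1)
      (by rw [varsOf_union]; exact h2)
  -- valuation for R1's body
  have hB1 : ∀ a ∈ R1.body, holdsA M (fun x => evalT M v (u x)) a := by
    intro a ha
    have hv : holdsA M v (Atom.subst u a) :=
      hbv _ (Set.mem_union_left _ ⟨a, ha, rfl⟩)
    exact (holdsA_subst M v u a).1 hv
  obtain ⟨w1, hw1a, hw1h⟩ := sat1 (fun x => evalT M v (u x)) hB1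
  set v' : ℕ → M.D := fun x => if x ∈ R1.exist then w1 x else v x with hv'def
  have hvv' : ∀ y, y ∉ R1.exist → v' y = v y := fun y hy => if_neg hy
  have hnb1 : ∀ y, y ∈ varsOf R1.body → y ∉ R1.exist := fun y hy hye => hye.2 hy
  -- u(H1) holds under v'
  have huH1 : ∀ b ∈ R1.head, holdsA M v' (Atom.subst u b) := by
    intro b hb
    rw [holdsA_subst]
    rw [holdsA_congr M b (w := w1) ?_]
    · exact hw1h b hb
    · intro x hx
      have hxH1 : x ∈ varsOf R1.head := mem_varsOf.2 ⟨b, hb, hx⟩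
      by_cases hxb : x ∈ varsOf R1.body
      · obtain ⟨y, hy, huy⟩ := hfr x ⟨hxb, hxH1⟩
        rw [huy]
        have h1 : w1 x = evalT M v (u x) := hw1a x hxb
        rw [h1, huy]
        show v' y = v y
        exact hvv' y (hnb1 y hy.1)
      · have hxe : x ∈ R1.exist := ⟨hxH1, hxb⟩
        have hux : u x = Term.var x := by
          apply hfix
          rintro (h | h)
          · exact hxb h.1
          · exact hD x (Or.inr hxH1) (Or.inl (varsOf_mono hsub h))
        rw [hux]
        show v' x = w1 x
        exact if_pos hxe
  -- R2's body holds under (fun x => evalT M v' (u x))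
  have hB2 : ∀ a ∈ R2.body, holdsA M (fun x => evalT M v' (u x)) a := by
    intro a ha
    by_cases ha' : a ∈ B2'
    · have hmem : Atom.subst u a ∈ substSet u H1' := heq ▸ ⟨a, ha', rfl⟩
      obtain ⟨b, hb, heab⟩ := hmem
      have hh := huH1 b (hH'sub hb)
      rw [heab] at hh
      exact (holdsA_subst M v' u a).1 hh
    · have hmem : a ∈ R2.body \ B2' := ⟨ha, ha'⟩
      have hv : holdsA M v (Atom.subst u a) :=
        hbv _ (Set.mem_union_right _ ⟨a, hmem, rfl⟩)
      rw [holdsA_subst] at hv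
      refine (holdsA_congr M a ?_).mpr hv
      intro x hx
      by_cases hxB2' : x ∈ varsOf B2'
      · have hxd : x ∈ varsOf (R2.body \ B2') := mem_varsOf.2 ⟨a, hmem, hx⟩
        obtain ⟨y, hy, huy⟩ := hsep x ⟨hxB2', hxd⟩
        rw [huy]
        show v' y = v y
        exact hvv' y (hnb1 y hy.1)
      · have hxb2 : x ∈ varsOf R2.body := mem_varsOf.2 ⟨a, ha, hx⟩
        have hux : u x = Term.var x := by
          apply hfix
          rintro (h | h)
          · exact hD x (Or.inl h.1) (Or.inl hxb2)
          · exact hxB2' h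
        rw [hux]
        show v' x = v x
        apply hvv'
        intro hxe
        exact hD x (Or.inr hxe.1) (Or.inl hxb2)
  obtain ⟨w2, hw2a, hw2h⟩ := sat2 (fun x => evalT M v' (u x)) hB2
  refine ⟨fun x => if x ∈ R2.exist then w2 x else v' x, ?_, ?_⟩
  · -- agreement on the composed body
    have hnotex : ∀ x, x ∈ varsOf R1.body ∨ x ∈ varsOf R2.body →
        (if x ∈ R2.exist then w2 x else v' x) = v x := by
      intro x hx
      have hx2 : x ∉ R2.exist := by
        rcases hx with h | h
        · exact fun he => hD x (Or.inl h) (Or.inr he.1)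
        · exact fun he => he.2 h
      have hx1 : x ∉ R1.exist := by
        rcases hx with h | h
        · exact fun he => he.2 h
        · exact fun he => hD x (Or.inr he.1) (Or.inl h)
      rw [if_neg hx2]
      exact hvv' x hx1
    intro x hx
    rw [show varsOf (substSet u R1.body ∪ substSet u (R2.body \ B2'))
        = varsOf (substSet u R1.body) ∪ varsOf (substSet u (R2.body \ B2'))
        from varsOf_union _ _] at hx
    rcases hx with h | h
    · rw [mem_varsOf_substSet] at h
      obtain ⟨z, hz, hzx⟩ := h
      apply hnotex
      by_cases hzf : z ∈ R1.frontier
      · obtain ⟨y, hy, huy⟩ := hfr z hzf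
        rw [huy] at hzx
        obtain rfl : y = x := by injection hzx
        exact Or.inl hy.1
      · have hz2 : z ∉ varsOf B2' := fun hzB =>
          hD z (Or.inl hz) (Or.inl (varsOf_mono hsub hzB))
        have hux : u z = Term.var z := by
          apply hfix
          rintro (h | h)
          · exact hzf h
          · exact hz2 h
        rw [hux] at hzx
        obtain rfl : z = x := by injection hzx
        exact Or.inl hz
    · rw [mem_varsOf_substSet] at h
      obtain ⟨z, hz, hzx⟩ := h
      have hzb2 : z ∈ varsOf R2.body := varsOf_mono (Set.diff_subset) hz
      apply hnotex
      by_cases hzB : z ∈ varsOf B2'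
      · obtain ⟨y, hy, huy⟩ := hsep z ⟨hzB, hz⟩
        rw [huy] at hzx
        obtain rfl : y = x := by injection hzx
        exact Or.inl hy.1
      · have hux : u z = Term.var z := by
          apply hfix
          rintro (h | h)
          · exact hD z (Or.inl h.1) (Or.inl hzb2)
          · exact hzB h
        rw [hux] at hzx
        obtain rfl : z = x := by injection hzx
        exact Or.inr hzb2
  · -- u(H2) holds
    rintro a ⟨b, hb, rfl⟩
    rw [holdsA_subst]
    refine (holdsA_congr M b ?_).mpr (hw2h b hb)
    intro x hx
    have hxH2 : x ∈ varsOf R2.head := mem_varsOf.2 ⟨b, hb, hx⟩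
    by_cases hxB2 : x ∈ varsOf R2.body
    · have hfr2 : x ∈ R2.frontier := ⟨hxB2, hxH2⟩
      have hw2x : w2 x = evalT M v' (u x) := hw2a x hxB2
      by_cases hxB2' : x ∈ varsOf B2'
      · obtain ⟨y, hyH1, huy⟩ := hmap x (Set.mem_union_right _ hxB2')
        have hyne : y ∉ R1.exist := fun hye => hc x hfr2 ⟨y, hye, huy.symm⟩
        have hyb : y ∈ varsOf R1.body := by
          by_contra h
          exact hyne ⟨hyH1, h⟩
        rw [hw2x, huy]
        show (if y ∈ R2.exist then w2 y else v' y) = v' y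
        apply if_neg
        exact fun hye => hD y (Or.inl hyb) (Or.inr hye.1)
      · have hux : u x = Term.var x := by
          apply hfix
          rintro (h | h)
          · exact hD x (Or.inl h.1) (Or.inl hxB2)
          · exact hxB2' h
        rw [hw2x, hux]
        show (if x ∈ R2.exist then w2 x else v' x) = v' x
        exact if_neg (fun hxe => hxe.2 hxB2)
    · have hxe : x ∈ R2.exist := ⟨hxH2, hxB2⟩
      have hux : u x = Term.var x := by
        apply hfix
        rintro (h | h)
        · exact hD x (Or.inl h.1) (Or.inr hxH2)
        · exact hxB2 (varsOf_mono hsub h)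
      rw [hux]
      show (if x ∈ R2.exist then w2 x else v' x) = w2 x
      exact if_pos hxe

end ER
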